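/- Let ℓ_r(x) for 0 ≤ r ≤ n be a family of polynomials, each ℓ_r symmetric of center r/2 (i.e., x^r · ℓ_r(1/x) = ℓ_r(x)). Define p_{n,k}(x) = ∑_{r=0}^{n} ℓ_r(x) · ∑_{i=0}^{r} C(n-k,i)·C(k,r-i)·x^{k-r+i} for 0 ≤ k ≤ n. Then x^n · p_{n,n-k}(1/x) = p_{n,k}(x) for all 0 ≤ k ≤ n. -/

import Mathlib

open Polynomial Finset

private lemma reflect_sum' {α : Type*} (s : Finset α) (f : α → ℝ[X]) (N : ℕ) :
    (∑ a ∈ s, f a).reflect N = ∑ a ∈ s, (f a).reflect N := by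
  induction s using Finset.cons_induction with
  | empty => simp
  | cons a s h ih => simp [Finset.sum_cons, Polynomial.reflect_add, ih]

/-- Symmetry `x^n p_{n,n-k}(1/x) = p_{n,k}(x)` of the polynomials `p_{n,k}`,
expressed via `Polynomial.reflect`. -/
theorem stmt_1 (n : ℕ) (ℓ : ℕ → ℝ[X])
    (hdeg : ∀ r ≤ n, (ℓ r).natDegree ≤ r)
    (hsym : ∀ r ≤ n, (ℓ r).reflect r = ℓ r)
    (p : ℕ → ℝ[X])
    (hp : ∀ k ≤ n, p k = ∑ r ∈ range (n + 1), ℓ r *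
        ∑ i ∈ range (r + 1),
          (Nat.choose (n - k) i * Nat.choose k (r - i) : ℝ[X]) * X ^ (k + i - r))
    (k : ℕ) (hk : k ≤ n) :
    (p (n - k)).reflect n = p k := by
  have hk' : n - k ≤ n := Nat.sub_le n k
  have hnk : n - (n - k) = k := Nat.sub_sub_self hk
  rw [hp k hk, hp (n - k) hk', hnk]
  rw [reflect_sum']
  refine Finset.sum_congr rfl ?_
  intro r hr
  rw [Finset.mem_range, Nat.lt_succ_iff] at hr
  set S : ℝ[X] := ∑ i ∈ range (r + 1),
      (Nat.choose k i * Nat.choose (n - k) (r - i) : ℝ[X]) * X ^ (n - k + i - r) with hS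
  have hcast : ∀ (a b e : ℕ), ((a : ℝ[X]) * (b : ℝ[X])) * X ^ e
      = C ((a * b : ℕ) : ℝ) * X ^ e := by
    intro a b e
    rw [Polynomial.C_eq_natCast, Nat.cast_mul]
  have hdegS : S.natDegree ≤ n - r := by
    refine Polynomial.natDegree_sum_le_of_forall_le _ _ ?_
    intro i hi
    rw [Finset.mem_range, Nat.lt_succ_iff] at hi
    by_cases h1 : i ≤ k
    · have he : n - k + i - r ≤ n - r := by omega
      refine natDegree_mul_le.trans ?_
      rw [← Nat.cast_mul, natDegree_natCast, natDegree_X_pow]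
      omega
    · have : Nat.choose k i = 0 := Nat.choose_eq_zero_of_lt (by omega)
      simp [this]
  have hmul : (ℓ r * S).reflect n = (ℓ r).reflect r * S.reflect (n - r) := by
    have h := Polynomial.reflect_mul (ℓ r) S (F := r) (G := n - r) (hdeg r hr) hdegS
    rwa [Nat.add_sub_cancel' hr] at h
  rw [hmul, hsym r hr, hS, reflect_sum']
  rw [← Finset.sum_range_reflect
      (fun i => (Nat.choose (n - k) i * Nat.choose k (r - i) : ℝ[X]) * X ^ (k + i - r)) (r + 1)]
  refine congrArg _ (Finset.sum_congr rfl ?_)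
  intro i hi
  rw [Finset.mem_range, Nat.lt_succ_iff] at hi
  simp only [Nat.add_sub_cancel]
  have hii : r - (r - i) = i := by omega
  rw [hii]
  by_cases h1 : i ≤ k
  · by_cases h2 : r ≤ n - k + i
    · have he : n - k + i - r ≤ n - r := by omega
      rw [hcast, reflect_C_mul_X_pow, revAt_le he]
      have e1 : n - r - (n - k + i - r) = k - i := by omega
      have e2 : k + (r - i) - r = k - i := by omega
      rw [e1, e2, ← Nat.cast_mul, Polynomial.C_eq_natCast, Nat.cast_mul]
      push_cast
      ring
    · have h0 : Nat.choose (n - k) (r - i) = 0 := Nat.choose_eq_zero_of_lt (by omega)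
      simp [h0]
  · have h0 : Nat.choose k i = 0 := Nat.choose_eq_zero_of_lt (by omega)
    simp [h0]
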